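/- Let A and B be bounded linear operators on a Banach space X, each generating a one-parameter group of isometries (‖exp(tA)x‖ = ‖x‖ and ‖exp(tB)x‖ = ‖x‖ for all t ∈ ℝ, x ∈ X). Then the commutator C = AB - BA also generates a one-parameter group of isometries on X. -/

import Mathlib

open NormedSpace Filter Finset Topology

section AuxBanachAlgebra

variable {𝔸 : Type*} [NormedRing 𝔸] [NormedAlgebra ℝ 𝔸] [CompleteSpace 𝔸] [NormOneClass 𝔸]

lemma exp_tail (y : 𝔸) (k : ℕ) :
    ‖exp y - ∑ i ∈ Finset.range k, ((i.factorial)⁻¹ : ℝ) • y ^ i‖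
      ≤ ‖y‖ ^ k * Real.exp ‖y‖ := by
  have hsumm : Summable fun n : ℕ => ((n.factorial)⁻¹ : ℝ) • y ^ n := expSeries_summable' y
  have h1 : exp y - ∑ i ∈ Finset.range k, ((i.factorial)⁻¹ : ℝ) • y ^ i
      = ∑' i : ℕ, (((i + k).factorial)⁻¹ : ℝ) • y ^ (i + k) := by
    have := Summable.sum_add_tsum_nat_add (f := fun n : ℕ => ((n.factorial)⁻¹ : ℝ) • y ^ n) k hsumm
    rw [exp_eq_tsum ℝ]
    dsimp only
    rw [← this]; abel
  rw [h1]
  have hsn : Summable fun i : ℕ => ‖y‖ ^ k * (‖y‖ ^ i / (i.factorial : ℝ)) :=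
    (Real.summable_pow_div_factorial ‖y‖).mul_left _
  have hle : ∀ i : ℕ, ‖(((i + k).factorial)⁻¹ : ℝ) • y ^ (i + k)‖
      ≤ ‖y‖ ^ k * (‖y‖ ^ i / (i.factorial : ℝ)) := by
    intro i
    rw [norm_smul, norm_inv, Real.norm_natCast]
    have h2 : ‖y ^ (i + k)‖ ≤ ‖y‖ ^ (i + k) := norm_pow_le _ _
    calc ((i + k).factorial : ℝ)⁻¹ * ‖y ^ (i + k)‖
        ≤ ((i + k).factorial : ℝ)⁻¹ * ‖y‖ ^ (i + k) := by
          gcongr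
      _ ≤ (i.factorial : ℝ)⁻¹ * ‖y‖ ^ (i + k) := by
          have : (i.factorial : ℝ) ≤ ((i+k).factorial : ℝ) := by
            exact_mod_cast Nat.factorial_le (Nat.le_add_right i k)
          gcongr
      
      _ = ‖y‖ ^ k * (‖y‖ ^ i / (i.factorial : ℝ)) := by
          rw [pow_add]; field_simp
  have hs2 : Summable fun i : ℕ => ‖(((i + k).factorial)⁻¹ : ℝ) • y ^ (i + k)‖ :=
    Summable.of_nonneg_of_le (fun _ => norm_nonneg _) hle hsn
  refine (norm_tsum_le_tsum_norm hs2).trans ?_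
  refine (Summable.tsum_le_tsum hle hs2 hsn).trans ?_
  rw [tsum_mul_left]
  have : ∑' i : ℕ, ‖y‖ ^ i / (i.factorial : ℝ) = Real.exp ‖y‖ := by
    rw [Real.exp_eq_exp_ℝ, exp_eq_tsum_div]
  rw [this]

lemma norm_exp_le'' (y : 𝔸) : ‖exp y‖ ≤ Real.exp ‖y‖ := by
  simpa using exp_tail y 0

lemma norm_exp_sub_one (y : 𝔸) : ‖exp y - 1‖ ≤ ‖y‖ * Real.exp ‖y‖ := by
  simpa [Finset.sum_range_succ] using exp_tail y 1

lemma norm_exp_sub_one_sub (y : 𝔸) : ‖exp y - 1 - y‖ ≤ ‖y‖ ^ 2 * Real.exp ‖y‖ := by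
  have := exp_tail y 2
  simp only [Finset.sum_range_succ, Finset.sum_range_zero, Nat.factorial_one, Nat.factorial_zero,
    Nat.cast_one, inv_one, one_smul, pow_zero, pow_one, zero_add] at this
  calc ‖exp y - 1 - y‖ = ‖exp y - (1 + y)‖ := by rw [sub_sub]
    _ ≤ ‖y‖ ^ 2 * Real.exp ‖y‖ := this

lemma pow_sub_pow_norm_le (P Q : 𝔸) {M : ℝ} (hM : 1 ≤ M) (hP : ‖P‖ ≤ M) (hQ : ‖Q‖ ≤ M) :
    ∀ n : ℕ, ‖P ^ n - Q ^ n‖ ≤ n * M ^ n * ‖P - Q‖ := by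
  intro n
  induction n with
  | zero => simp
  | succ n ih =>
    have key : P ^ (n + 1) - Q ^ (n + 1) = P ^ n * (P - Q) + (P ^ n - Q ^ n) * Q := by
      rw [pow_succ, pow_succ, mul_sub, sub_mul]
      abel
    rw [key]
    have h1 : ‖P ^ n * (P - Q)‖ ≤ M ^ n * ‖P - Q‖ := by
      refine (norm_mul_le _ _).trans ?_
      exact mul_le_mul_of_nonneg_right
        ((norm_pow_le _ _).trans (pow_le_pow_left₀ (norm_nonneg _) hP n)) (norm_nonneg _)
    have h2 : ‖(P ^ n - Q ^ n) * Q‖ ≤ (n * M ^ n * ‖P - Q‖) * M := by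
      refine (norm_mul_le _ _).trans ?_
      have hn : (0:ℝ) ≤ ‖P ^ n - Q ^ n‖ := norm_nonneg _
      exact mul_le_mul ih hQ (norm_nonneg _) (by positivity)
    calc ‖P ^ n * (P - Q) + (P ^ n - Q ^ n) * Q‖
        ≤ ‖P ^ n * (P - Q)‖ + ‖(P ^ n - Q ^ n) * Q‖ := norm_add_le _ _
      _ ≤ M ^ n * ‖P - Q‖ + (n * M ^ n * ‖P - Q‖) * M := by linarith
      _ ≤ (n + 1 : ℕ) * M ^ (n + 1) * ‖P - Q‖ := by
          have hMn : (1:ℝ) ≤ M ^ n := one_le_pow₀ hM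
          have h0 : (0:ℝ) ≤ ‖P - Q‖ := norm_nonneg _
          have h00 : (0:ℝ) ≤ M ^ n := by positivity
          push_cast
          nlinarith [pow_succ M n, mul_nonneg (mul_nonneg (Nat.cast_nonneg n) h00) h0,
            mul_nonneg h00 h0, mul_nonneg (mul_nonneg (sub_nonneg.2 hM) h00) h0]

lemma smul_norm_eq (y : 𝔸) (s : ℝ) (hs : 0 ≤ s) : ‖s • y‖ = s * ‖y‖ := by
  rw [norm_smul s y, Real.norm_eq_abs, abs_of_nonneg hs]

lemma F_defect (A B : 𝔸) : ∃ D : ℝ, 0 ≤ D ∧ ∀ s : ℝ, 0 ≤ s → s ≤ 1 →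
    ‖exp (s • A) * exp (s • B) * (exp (-(s • A)) * exp (-(s • B))) - 1
      - s ^ 2 • (A * B - B * A)‖ ≤ D * s ^ 3 := by
  obtain ⟨na, hna⟩ : ∃ r : ℝ, ‖A‖ = r := ⟨_, rfl⟩
  obtain ⟨nb, hnb⟩ : ∃ r : ℝ, ‖B‖ = r := ⟨_, rfl⟩
  obtain ⟨E, hE⟩ : ∃ r : ℝ, Real.exp (na + nb) = r := ⟨_, rfl⟩
  have hna0 : 0 ≤ na := hna ▸ norm_nonneg A
  have hnb0 : 0 ≤ nb := hnb ▸ norm_nonneg B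
  have hE1 : 1 ≤ E := hE ▸ Real.one_le_exp (by positivity)
  obtain ⟨C, hC⟩ : ∃ C : 𝔸, A * B - B * A = C := ⟨_, rfl⟩
  refine ⟨(2 * (na * (nb ^ 2 * E) + na ^ 2 * E * nb + na ^ 2 * E * (nb ^ 2 * E))) * (E * E)
      + ‖C‖ * ((na + nb) * (E * E)), by positivity, ?_⟩
  intro s hs0 hs1
  obtain ⟨a, ha⟩ : ∃ y : 𝔸, exp (s • A) = y := ⟨_, rfl⟩
  obtain ⟨b, hb⟩ : ∃ y : 𝔸, exp (s • B) = y := ⟨_, rfl⟩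
  obtain ⟨a', ha'⟩ : ∃ y : 𝔸, exp (-(s • A)) = y := ⟨_, rfl⟩
  obtain ⟨b', hb'⟩ : ∃ y : 𝔸, exp (-(s • B)) = y := ⟨_, rfl⟩
  have hsAn : ‖s • A‖ = s * na := by rw [smul_norm_eq A s hs0, hna]
  have hsBn : ‖s • B‖ = s * nb := by rw [smul_norm_eq B s hs0, hnb]
  have hsAE : Real.exp ‖s • A‖ ≤ E := by
    rw [hsAn, ← hE]; exact Real.exp_le_exp.2 (by nlinarith)
  have hsBE : Real.exp ‖s • B‖ ≤ E := by
    rw [hsBn, ← hE]; exact Real.exp_le_exp.2 (by nlinarith)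
  have haE : ‖a‖ ≤ E := ha ▸ (norm_exp_le'' _).trans hsAE
  have hbE : ‖b‖ ≤ E := hb ▸ (norm_exp_le'' _).trans hsBE
  have ha'E : ‖a'‖ ≤ E := ha' ▸ (norm_exp_le'' _).trans (by rw [norm_neg]; exact hsAE)
  have hb'E : ‖b'‖ ≤ E := hb' ▸ (norm_exp_le'' _).trans (by rw [norm_neg]; exact hsBE)
  -- remainders
  obtain ⟨Ea, hEadef⟩ : ∃ y : 𝔸, a - 1 - s • A = y := ⟨_, rfl⟩
  obtain ⟨Eb, hEbdef⟩ : ∃ y : 𝔸, b - 1 - s • B = y := ⟨_, rfl⟩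
  have hEa : ‖Ea‖ ≤ s ^ 2 * (na ^ 2 * E) := by
    rw [← hEadef, ← ha]
    refine (norm_exp_sub_one_sub (s • A)).trans ?_
    calc ‖s • A‖ ^ 2 * Real.exp ‖s • A‖ ≤ ‖s • A‖ ^ 2 * E := by gcongr
      _ = s ^ 2 * (na ^ 2 * E) := by rw [hsAn]; ring
  have hEb : ‖Eb‖ ≤ s ^ 2 * (nb ^ 2 * E) := by
    rw [← hEbdef, ← hb]
    refine (norm_exp_sub_one_sub (s • B)).trans ?_
    calc ‖s • B‖ ^ 2 * Real.exp ‖s • B‖ ≤ ‖s • B‖ ^ 2 * E := by gcongr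
      _ = s ^ 2 * (nb ^ 2 * E) := by rw [hsBn]; ring
  -- inverse identities
  have haa' : a * a' = 1 := by
    let +nondep : NormedAlgebra ℚ 𝔸 := .restrictScalars ℚ ℝ 𝔸
    rw [← ha, ← ha', ← exp_add_of_commute (Commute.refl (s • A)).neg_right, add_neg_cancel, exp_zero]
  have hbb' : b * b' = 1 := by
    let +nondep : NormedAlgebra ℚ 𝔸 := .restrictScalars ℚ ℝ 𝔸
    rw [← hb, ← hb', ← exp_add_of_commute (Commute.refl (s • B)).neg_right, add_neg_cancel, exp_zero]
  -- commutator expansion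
  have hpq : (s • A) * (s • B) - (s • B) * (s • A) = s ^ 2 • C := by
    rw [← hC, smul_sub]
    simp [smul_mul_assoc, mul_smul_comm, smul_smul, sq]
  have haEa : a = 1 + s • A + Ea := by rw [← hEadef]; abel
  have hbEb : b = 1 + s • B + Eb := by rw [← hEbdef]; abel
  have hW : a * b - b * a - s ^ 2 • C
      = (s • A) * Eb + Ea * (s • B) + Ea * Eb - ((s • B) * Ea + Eb * (s • A) + Eb * Ea) := by
    rw [← hpq, haEa, hbEb]
    noncomm_ring
    module
  have hWn : ‖a * b - b * a - s ^ 2 • C‖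
      ≤ 2 * (na * (nb ^ 2 * E) + na ^ 2 * E * nb + na ^ 2 * E * (nb ^ 2 * E)) * s ^ 3 := by
    rw [hW]
    have t1 : ‖(s • A) * Eb‖ ≤ s ^ 3 * (na * (nb ^ 2 * E)) := by
      refine (norm_mul_le _ _).trans ?_
      have h1 : (s * na) * (s ^ 2 * (nb ^ 2 * E)) = s ^ 3 * (na * (nb ^ 2 * E)) := by ring
      rw [hsAn, ← h1]
      exact mul_le_mul_of_nonneg_left hEb (by positivity)
    have t2 : ‖Ea * (s • B)‖ ≤ s ^ 3 * (na ^ 2 * E * nb) := by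
      refine (norm_mul_le _ _).trans ?_
      have h1 : (s ^ 2 * (na ^ 2 * E)) * (s * nb) = s ^ 3 * (na ^ 2 * E * nb) := by ring
      rw [hsBn, ← h1]
      exact mul_le_mul_of_nonneg_right hEa (by positivity)
    have t3 : ‖Ea * Eb‖ ≤ s ^ 3 * (na ^ 2 * E * (nb ^ 2 * E)) := by
      refine (norm_mul_le _ _).trans ?_
      refine (mul_le_mul hEa hEb (norm_nonneg _) (by positivity)).trans ?_
      have h1 : (s ^ 2 * (na ^ 2 * E)) * (s ^ 2 * (nb ^ 2 * E)) = s ^ 4 * (na ^ 2 * E * (nb ^ 2 * E)) := by ring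
      rw [h1]
      have hs4 : s ^ 4 ≤ s ^ 3 := pow_le_pow_of_le_one hs0 hs1 (by norm_num)
      exact mul_le_mul_of_nonneg_right hs4 (by positivity)
    have t4 : ‖(s • B) * Ea‖ ≤ s ^ 3 * (na ^ 2 * E * nb) := by
      refine (norm_mul_le _ _).trans ?_
      have h1 : (s * nb) * (s ^ 2 * (na ^ 2 * E)) = s ^ 3 * (na ^ 2 * E * nb) := by ring
      rw [hsBn, ← h1]
      exact mul_le_mul_of_nonneg_left hEa (by positivity)
    have t5 : ‖Eb * (s • A)‖ ≤ s ^ 3 * (na * (nb ^ 2 * E)) := by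
      refine (norm_mul_le _ _).trans ?_
      have h1 : (s ^ 2 * (nb ^ 2 * E)) * (s * na) = s ^ 3 * (na * (nb ^ 2 * E)) := by ring
      rw [hsAn, ← h1]
      exact mul_le_mul_of_nonneg_right hEb (by positivity)
    have t6 : ‖Eb * Ea‖ ≤ s ^ 3 * (na ^ 2 * E * (nb ^ 2 * E)) := by
      refine (norm_mul_le _ _).trans ?_
      refine (mul_le_mul hEb hEa (norm_nonneg _) (by positivity)).trans ?_
      have h1 : (s ^ 2 * (nb ^ 2 * E)) * (s ^ 2 * (na ^ 2 * E)) = s ^ 4 * (na ^ 2 * E * (nb ^ 2 * E)) := by ring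
      rw [h1]
      have hs4 : s ^ 4 ≤ s ^ 3 := pow_le_pow_of_le_one hs0 hs1 (by norm_num)
      exact mul_le_mul_of_nonneg_right hs4 (by positivity)
    have tri : ‖(s • A) * Eb + Ea * (s • B) + Ea * Eb - ((s • B) * Ea + Eb * (s • A) + Eb * Ea)‖
        ≤ ‖(s • A) * Eb‖ + ‖Ea * (s • B)‖ + ‖Ea * Eb‖ + (‖(s • B) * Ea‖ + ‖Eb * (s • A)‖ + ‖Eb * Ea‖) := by
      refine (norm_sub_le _ _).trans ?_
      gcongr <;> exact (norm_add_le _ _).trans (by gcongr <;> exact norm_add_le _ _)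
    refine tri.trans ?_
    linarith
  -- P := a' * b'
  have hPn : ‖a' * b'‖ ≤ E * E :=
    (norm_mul_le _ _).trans (mul_le_mul ha'E hb'E (norm_nonneg _) (by positivity))
  have hb'1 : ‖b' - 1‖ ≤ (s * nb) * E := by
    rw [← hb']
    refine (norm_exp_sub_one _).trans ?_
    have h2 : Real.exp ‖-(s • B)‖ ≤ E := by rw [norm_neg]; exact hsBE
    rw [norm_neg, hsBn]
    exact mul_le_mul_of_nonneg_left (by rw [← hsBn, ← norm_neg (s • B)]; exact h2) (by positivity)
  have ha'1 : ‖a' - 1‖ ≤ (s * na) * E := by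
    rw [← ha']
    refine (norm_exp_sub_one _).trans ?_
    have h2 : Real.exp ‖-(s • A)‖ ≤ E := by rw [norm_neg]; exact hsAE
    rw [norm_neg, hsAn]
    exact mul_le_mul_of_nonneg_left (by rw [← hsAn, ← norm_neg (s • A)]; exact h2) (by positivity)
  have hP1 : ‖a' * b' - 1‖ ≤ s * ((na + nb) * (E * E)) := by
    have hdecomp : a' * b' - 1 = a' * (b' - 1) + (a' - 1) := by noncomm_ring
    have u1 : ‖a' * (b' - 1)‖ ≤ E * ((s * nb) * E) :=
      (norm_mul_le _ _).trans (mul_le_mul ha'E hb'1 (norm_nonneg _) (by positivity))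
    rw [hdecomp]
    refine (norm_add_le _ _).trans ?_
    nlinarith [mul_nonneg hs0 hna0, mul_nonneg hs0 hnb0,
      mul_nonneg (mul_nonneg (mul_nonneg hs0 hna0) (by positivity : (0:ℝ) ≤ E)) (by linarith : (0:ℝ) ≤ E - 1)]
  -- assemble
  have hF1 : a * b * (a' * b') - 1 = (a * b - b * a) * (a' * b') := by
    have h2 : b * a * (a' * b') = 1 := by
      calc b * a * (a' * b') = b * (a * a') * b' := by noncomm_ring
        _ = 1 := by rw [haa', mul_one, hbb']
    rw [sub_mul, h2]
  have hkey : a * b * (a' * b') - 1 - s ^ 2 • C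
      = (a * b - b * a - s ^ 2 • C) * (a' * b') + (s ^ 2 • C) * (a' * b' - 1) := by
    rw [hF1]; noncomm_ring
  rw [ha, hb, ha', hb', hC, hkey]
  have hCn : ‖(s ^ 2 • C) * (a' * b' - 1)‖ ≤ s ^ 3 * (‖C‖ * ((na + nb) * (E * E))) := by
    refine (norm_mul_le _ _).trans ?_
    rw [smul_norm_eq C (s ^ 2) (by positivity)]
    have h1 : (s ^ 2 * ‖C‖) * (s * ((na + nb) * (E * E))) = s ^ 3 * (‖C‖ * ((na + nb) * (E * E))) := by ring
    rw [← h1]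
    exact mul_le_mul_of_nonneg_left hP1 (by positivity)
  have hmain : ‖(a * b - b * a - s ^ 2 • C) * (a' * b')‖
      ≤ (2 * (na * (nb ^ 2 * E) + na ^ 2 * E * nb + na ^ 2 * E * (nb ^ 2 * E)) * s ^ 3) * (E * E) := by
    refine (norm_mul_le _ _).trans ?_
    exact mul_le_mul hWn hPn (norm_nonneg _) (by positivity)
  refine (norm_add_le _ _).trans ?_
  have h1 : (2 * (na * (nb ^ 2 * E) + na ^ 2 * E * nb + na ^ 2 * E * (nb ^ 2 * E)) * s ^ 3) * (E * E)
      = (2 * (na * (nb ^ 2 * E) + na ^ 2 * E * nb + na ^ 2 * E * (nb ^ 2 * E)) * (E * E)) * s ^ 3 := by ring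
  rw [h1] at hmain
  have h2 : (2 * (na * (nb ^ 2 * E) + na ^ 2 * E * nb + na ^ 2 * E * (nb ^ 2 * E)) * (E * E)
      + ‖C‖ * ((na + nb) * (E * E))) * s ^ 3
      = (2 * (na * (nb ^ 2 * E) + na ^ 2 * E * nb + na ^ 2 * E * (nb ^ 2 * E)) * (E * E)) * s ^ 3
        + s ^ 3 * (‖C‖ * ((na + nb) * (E * E))) := by ring
  rw [h2]
  linarith

end AuxBanachAlgebra

lemma key_le {X : Type*} [NormedAddCommGroup X] [NormedSpace ℝ X] [CompleteSpace X]
    [Nontrivial X] (A B : X →L[ℝ] X)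
    (hA : ∀ t : ℝ, ∀ x : X, ‖exp (t • A) x‖ = ‖x‖)
    (hB : ∀ t : ℝ, ∀ x : X, ‖exp (t • B) x‖ = ‖x‖)
    {t : ℝ} (ht : 0 ≤ t) (x : X) : ‖exp (t • (A * B - B * A)) x‖ ≤ ‖x‖ := by
  obtain ⟨D, hD0, hD⟩ := F_defect A B
  obtain ⟨C, hC⟩ : ∃ C : X →L[ℝ] X, A * B - B * A = C := ⟨_, rfl⟩
  rw [hC]
  obtain ⟨nc, hnc⟩ : ∃ r : ℝ, ‖C‖ = r := ⟨_, rfl⟩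
  have hnc0 : 0 ≤ nc := hnc ▸ norm_nonneg C
  obtain ⟨K, hK⟩ : ∃ r : ℝ, D + Real.sqrt t * nc ^ 2 * Real.exp (t * nc) = r := ⟨_, rfl⟩
  have hK0 : 0 ≤ K := by rw [← hK]; positivity
  obtain ⟨κ, hκ⟩ : ∃ r : ℝ, Real.exp (t * nc) * K * t = r := ⟨_, rfl⟩
  have step : ∀ n : ℕ, 1 ≤ n → t ≤ n →
      ‖exp (t • C) x‖ ≤ ‖x‖ + κ * Real.sqrt (t / n) * ‖x‖ := by
    intro n hn htn
    have hnR : (1:ℝ) ≤ (n:ℝ) := by exact_mod_cast hn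
    have hnpos : (0:ℝ) < n := by linarith
    obtain ⟨s, hs⟩ : ∃ r : ℝ, Real.sqrt (t / n) = r := ⟨_, rfl⟩
    have hs0 : 0 ≤ s := hs ▸ Real.sqrt_nonneg _
    have hs2 : s ^ 2 = t / n := by rw [← hs]; exact Real.sq_sqrt (by positivity)
    have hns2 : (n:ℝ) * s ^ 2 = t := by rw [hs2]; field_simp
    have hs1 : s ≤ 1 := by
      rw [← hs]; rw [Real.sqrt_le_one]; rw [div_le_one hnpos]; exact htn
    have hst : s ≤ Real.sqrt t := by
      rw [← hs]
      exact Real.sqrt_le_sqrt (by rw [div_le_iff₀ hnpos]; nlinarith)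
    have hs2t : s ^ 2 ≤ t := by
      rw [hs2, div_le_iff₀ hnpos]; nlinarith
    obtain ⟨F, hF⟩ : ∃ F : X →L[ℝ] X,
        exp (s • A) * exp (s • B) * (exp (-(s • A)) * exp (-(s • B))) = F := ⟨_, rfl⟩
    -- F is an isometry
    have hFx : ∀ y : X, ‖F y‖ = ‖y‖ := by
      intro y
      rw [← hF]
      simp only [ContinuousLinearMap.mul_apply]
      rw [hA s, hB s, ← neg_smul, ← neg_smul, hA (-s), hB (-s)]
    have hFxn : ∀ m : ℕ, ∀ y : X, ‖(F ^ m) y‖ = ‖y‖ := by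
      intro m
      induction m with
      | zero => intro y; simp
      | succ m ih => intro y; rw [pow_succ, ContinuousLinearMap.mul_apply, ih, hFx]
    have hFn1 : ‖F‖ ≤ 1 := ContinuousLinearMap.opNorm_le_bound _ zero_le_one
      (fun y => by rw [hFx, one_mul])
    -- defect bounds
    have hdefF : ‖F - 1 - s ^ 2 • C‖ ≤ D * s ^ 3 := by
      rw [← hF, ← hC]; exact hD s hs0 hs1
    have hs2Cn : ‖s ^ 2 • C‖ = s ^ 2 * nc := by rw [smul_norm_eq C (s ^ 2) (by positivity), hnc]
    have hdefE : ‖exp (s ^ 2 • C) - 1 - s ^ 2 • C‖ ≤ (Real.sqrt t * nc ^ 2 * Real.exp (t * nc)) * s ^ 3 := by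
      refine (norm_exp_sub_one_sub _).trans ?_
      rw [hs2Cn]
      have he : Real.exp (s ^ 2 * nc) ≤ Real.exp (t * nc) :=
        Real.exp_le_exp.2 (mul_le_mul_of_nonneg_right hs2t hnc0)
      calc (s ^ 2 * nc) ^ 2 * Real.exp (s ^ 2 * nc)
          ≤ (s ^ 2 * nc) ^ 2 * Real.exp (t * nc) := by gcongr
        _ = (s ^ 4 * s ^ 0) * nc ^ 2 * Real.exp (t * nc) := by ring
        _ ≤ (s ^ 3 * Real.sqrt t) * nc ^ 2 * Real.exp (t * nc) := by
            have : s ^ 4 * s ^ 0 = s ^ 3 * s := by ring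
            rw [this]
            have h4 : s ^ 3 * s ≤ s ^ 3 * Real.sqrt t :=
              mul_le_mul_of_nonneg_left hst (by positivity)
            gcongr
        _ = (Real.sqrt t * nc ^ 2 * Real.exp (t * nc)) * s ^ 3 := by ring
    have hdelta : ‖exp (s ^ 2 • C) - F‖ ≤ K * s ^ 3 := by
      have hid : exp (s ^ 2 • C) - F
          = (exp (s ^ 2 • C) - 1 - s ^ 2 • C) - (F - 1 - s ^ 2 • C) := by abel
      rw [hid, ← hK]
      refine (norm_sub_le _ _).trans ?_
      have : (D + Real.sqrt t * nc ^ 2 * Real.exp (t * nc)) * s ^ 3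
          = (Real.sqrt t * nc ^ 2 * Real.exp (t * nc)) * s ^ 3 + D * s ^ 3 := by ring
      rw [this]
      exact add_le_add hdefE hdefF
    -- telescoping
    obtain ⟨M, hM⟩ : ∃ r : ℝ, Real.exp (s ^ 2 * nc) = r := ⟨_, rfl⟩
    have hM1 : 1 ≤ M := hM ▸ Real.one_le_exp (by positivity)
    have hexpM : ‖exp (s ^ 2 • C)‖ ≤ M := by
      rw [← hM, ← hs2Cn]; exact norm_exp_le'' _
    have hMn : M ^ n = Real.exp (t * nc) := by
      rw [← hM, ← Real.exp_nat_mul]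
      congr 1
      rw [← hns2]; ring
    have htel : ‖exp (s ^ 2 • C) ^ n - F ^ n‖ ≤ Real.exp (t * nc) * K * t * s := by
      refine (pow_sub_pow_norm_le _ _ hM1 hexpM (hFn1.trans hM1) n).trans ?_
      rw [hMn]
      calc (n:ℝ) * Real.exp (t * nc) * ‖exp (s ^ 2 • C) - F‖
          ≤ (n:ℝ) * Real.exp (t * nc) * (K * s ^ 3) := by
            gcongr
        _ = Real.exp (t * nc) * K * (((n:ℝ) * s ^ 2) * s) := by ring
        _ = Real.exp (t * nc) * K * t * s := by rw [hns2]; ring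
    -- put it together
    have hexpt : exp (t • C) = exp (s ^ 2 • C) ^ n := by
      let +nondep : NormedAlgebra ℚ (X →L[ℝ] X) := .restrictScalars ℚ ℝ (X →L[ℝ] X)
      rw [← exp_nsmul, ← Nat.cast_smul_eq_nsmul ℝ n (s ^ 2 • C), smul_smul, hns2]
    rw [hexpt]
    calc ‖(exp (s ^ 2 • C) ^ n) x‖
        = ‖(F ^ n) x + (exp (s ^ 2 • C) ^ n - F ^ n) x‖ := by
          congr 1
          simp [ContinuousLinearMap.sub_apply]
      _ ≤ ‖(F ^ n) x‖ + ‖(exp (s ^ 2 • C) ^ n - F ^ n) x‖ := norm_add_le _ _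
      _ ≤ ‖x‖ + ‖exp (s ^ 2 • C) ^ n - F ^ n‖ * ‖x‖ := by
          rw [hFxn n x]
          exact add_le_add_right (ContinuousLinearMap.le_opNorm _ _) _
      _ ≤ ‖x‖ + (Real.exp (t * nc) * K * t * s) * ‖x‖ := by
          gcongr
      _ = ‖x‖ + κ * Real.sqrt (t / n) * ‖x‖ := by rw [← hκ, hs]
  -- pass to the limit
  have hT : Tendsto (fun n : ℕ => ‖x‖ + κ * Real.sqrt (t / n) * ‖x‖) atTop (𝓝 ‖x‖) := by
    have h1 : Tendsto (fun n : ℕ => Real.sqrt (t / n)) atTop (𝓝 0) := by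
      have h2 : Tendsto (fun n : ℕ => t / (n:ℝ)) atTop (𝓝 0) :=
        tendsto_const_div_atTop_nhds_zero_nat t
      have h3 := (Real.continuous_sqrt.tendsto 0).comp h2
      simpa [Function.comp_def] using h3
    have h4 : Tendsto (fun n : ℕ => ‖x‖ + κ * Real.sqrt (t / n) * ‖x‖) atTop
        (𝓝 (‖x‖ + κ * 0 * ‖x‖)) :=
      tendsto_const_nhds.add ((h1.const_mul κ).mul_const ‖x‖)
    simpa using h4
  refine ge_of_tendsto hT ?_
  rw [eventually_atTop]
  refine ⟨max 1 ⌈t⌉₊, fun n hn => step n (le_trans (le_max_left _ _) hn) ?_⟩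
  have h5 : (⌈t⌉₊:ℝ) ≤ n := by exact_mod_cast le_trans (le_max_right _ _) hn
  exact (Nat.le_ceil t).trans h5

lemma key_eq {X : Type*} [NormedAddCommGroup X] [NormedSpace ℝ X] [CompleteSpace X]
    [Nontrivial X] (A B : X →L[ℝ] X)
    (hA : ∀ t : ℝ, ∀ x : X, ‖exp (t • A) x‖ = ‖x‖)
    (hB : ∀ t : ℝ, ∀ x : X, ‖exp (t • B) x‖ = ‖x‖)
    {t : ℝ} (ht : 0 ≤ t) (x : X) : ‖exp (t • (A * B - B * A)) x‖ = ‖x‖ := by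
  refine le_antisymm (key_le A B hA hB ht x) ?_
  have hsw : -(t • (A * B - B * A)) = t • (B * A - A * B) := by
    rw [← smul_neg, neg_sub]
  have hinv : exp (t • (B * A - A * B)) * exp (t • (A * B - B * A)) = 1 := by
    let +nondep : NormedAlgebra ℚ (X →L[ℝ] X) := .restrictScalars ℚ ℝ (X →L[ℝ] X)
    rw [← hsw, ← exp_add_of_commute ((Commute.refl (t • (A * B - B * A))).neg_left),
      neg_add_cancel, exp_zero]
  calc ‖x‖ = ‖(exp (t • (B * A - A * B)) * exp (t • (A * B - B * A))) x‖ := by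
        rw [hinv]; simp
    _ = ‖exp (t • (B * A - A * B)) (exp (t • (A * B - B * A)) x)‖ := by
        rw [ContinuousLinearMap.mul_apply]
    _ ≤ ‖exp (t • (A * B - B * A)) x‖ := key_le B A hB hA ht _

/-- If the bounded operators `A` and `B` each generate a one-parameter group of isometries
on a Banach space `X`, then so does their commutator `A * B - B * A`. -/
theorem stmt_3 {X : Type*} [NormedAddCommGroup X] [NormedSpace ℝ X] [CompleteSpace X]
    (A B : X →L[ℝ] X)
    (hA : ∀ t : ℝ, ∀ x : X, ‖exp (t • A) x‖ = ‖x‖)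
    (hB : ∀ t : ℝ, ∀ x : X, ‖exp (t • B) x‖ = ‖x‖) :
    ∀ t : ℝ, ∀ x : X, ‖exp (t • (A * B - B * A)) x‖ = ‖x‖ := by
  intro t x
  rcases subsingleton_or_nontrivial X with hS | hN
  · rw [Subsingleton.elim (exp (t • (A * B - B * A)) x) x]
  · rcases le_total 0 t with ht | ht
    · exact key_eq A B hA hB ht x
    · have h : t • (A * B - B * A) = (-t) • (B * A - A * B) := by
        rw [neg_smul, ← smul_neg, neg_sub]
      rw [h]
      exact key_eq B A hB hA (neg_nonneg.2 ht) x
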